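/- For every finite set 𝓘 ⊆ ℤ ∪ {−∞,+∞} of interval endpoints and every k ∈ ℕ, the set of MTL formulas of until rank at most k all of whose interval endpoints belong to 𝓘 contains only finitely many formulas up to logical equivalence (over a fixed finite set of propositional variables). -/

import Mathlib

/-- Integers extended with `-∞` (`⊥`) and `+∞` (`⊤`), used as interval endpoints. -/
abbrev EInt' := WithBot (WithTop ℤ)

def EInt'.ofInt (n : ℤ) : EInt' := ((n : WithTop ℤ) : EInt')

/-- An interval of integers, given by two (possibly infinite) endpoints and
openness flags. -/
structure Iv where
  lo : EInt'
  hi : EInt'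
  loOpen : Bool
  hiOpen : Bool

/-- Membership of an integer in an interval. -/
def Iv.mem (I : Iv) (d : ℤ) : Prop :=
  (if I.loOpen then I.lo < EInt'.ofInt d else I.lo ≤ EInt'.ofInt d) ∧
  (if I.hiOpen then EInt'.ofInt d < I.hi else EInt'.ofInt d ≤ I.hi)

/-- The interval `(-∞, +∞)`. -/
def Iv.univ : Iv := ⟨⊥, ⊤, true, true⟩

/-- The singleton interval `[n, n]`. -/
def Iv.pt (n : ℤ) : Iv := ⟨EInt'.ofInt n, EInt'.ofInt n, false, false⟩

/-- A data word: an infinite sequence of pairs of a set of propositions and a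
natural number data value. -/
abbrev DataWord (P : Type) := ℕ → (Set P) × ℕ

/-- Syntax of MTL: atoms, negation, conjunction, and interval-constrained
strict until. -/
inductive MTL (P : Type) where
  | atom : P → MTL P
  | neg  : MTL P → MTL P
  | and  : MTL P → MTL P → MTL P
  | untl : MTL P → Iv → MTL P → MTL P

/-- Satisfaction of an MTL formula at position `i` of data word `w`. -/
def MTL.sat {P : Type} (w : DataWord P) : ℕ → MTL P → Prop
  | i, .atom p => p ∈ (w i).1
  | i, .neg φ => ¬ MTL.sat w i φ
  | i, .and φ ψ => MTL.sat w i φ ∧ MTL.sat w i ψ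
  | i, .untl φ I ψ => ∃ j, i < j ∧ MTL.sat w j ψ ∧
      I.mem (((w j).2 : ℤ) - ((w i).2 : ℤ)) ∧
      ∀ k, i < k → k < j → MTL.sat w k φ

/-- A data word satisfies an MTL formula if it holds at position `0`. -/
def MTL.models {P : Type} (w : DataWord P) (φ : MTL P) : Prop := MTL.sat w 0 φ

/-- The until rank of an MTL formula. -/
def MTL.urk {P : Type} : MTL P → ℕ
  | .atom _ => 0
  | .neg φ => φ.urk
  | .and φ ψ => max φ.urk ψ.urk
  | .untl φ _ ψ => max φ.urk ψ.urk + 1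

/-- All interval endpoints of until operators in the formula lie in `S`. -/
def MTL.endpointsIn {P : Type} : MTL P → Set EInt' → Prop
  | .atom _, _ => True
  | .neg φ, S => φ.endpointsIn S
  | .and φ ψ, S => φ.endpointsIn S ∧ ψ.endpointsIn S
  | .untl φ I ψ, S => I.lo ∈ S ∧ I.hi ∈ S ∧ φ.endpointsIn S ∧ ψ.endpointsIn S

/-- Two MTL formulas are equivalent if they are satisfied at exactly the same
pairs of a data word and a position. -/
def MTL.equivF {P : Type} (φ ψ : MTL P) : Prop :=
  ∀ (w : DataWord P) (i : ℕ), MTL.sat w i φ ↔ MTL.sat w i ψ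

namespace MTLAux

variable {P : Type}

/-- Extract some atom occurring in a formula. -/
def someAtom : MTL P → P
  | .atom p => p
  | .neg φ => someAtom φ
  | .and φ _ => someAtom φ
  | .untl φ _ _ => someAtom φ

theorem equivF_refl (φ : MTL P) : MTL.equivF φ φ := fun _ _ => Iff.rfl

theorem equivF_trans {φ ψ χ : MTL P} (h1 : MTL.equivF φ ψ) (h2 : MTL.equivF ψ χ) :
    MTL.equivF φ χ := fun w i => (h1 w i).trans (h2 w i)

theorem equivF_untl {φ φ' ψ ψ' : MTL P} (I : Iv) (h1 : MTL.equivF φ φ')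
    (h2 : MTL.equivF ψ ψ') : MTL.equivF (.untl φ I ψ) (.untl φ' I ψ') := by
  intro w i
  simp only [MTL.sat]
  constructor
  · rintro ⟨j, hj, hs, hm, hk⟩
    exact ⟨j, hj, (h2 w j).mp hs, hm, fun k a b => (h1 w k).mp (hk k a b)⟩
  · rintro ⟨j, hj, hs, hm, hk⟩
    exact ⟨j, hj, (h2 w j).mpr hs, hm, fun k a b => (h1 w k).mpr (hk k a b)⟩

/-- Boolean combinations of a list of generator formulas. -/
inductive BoolComb (G : List (MTL P)) : MTL P → Prop
  | base (φ : MTL P) (h : φ ∈ G) : BoolComb G φ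
  | neg {φ} : BoolComb G φ → BoolComb G (.neg φ)
  | and {φ ψ} : BoolComb G φ → BoolComb G ψ → BoolComb G (.and φ ψ)

open Classical in
/-- Truth valuation of the generators at a given word/position. -/
noncomputable def ev (G : List (MTL P)) (w : DataWord P) (i : ℕ) :
    Fin G.length → Bool := fun j => decide (MTL.sat w i (G.get j))

def falseF (p : P) : MTL P := .and (.atom p) (.neg (.atom p))

theorem sat_falseF (p : P) (w : DataWord P) (i : ℕ) : ¬ MTL.sat w i (falseF p) := by
  simp only [falseF, MTL.sat]
  tauto

def bigAnd (p : P) : List (MTL P) → MTL P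
  | [] => .neg (falseF p)
  | φ :: l => .and φ (bigAnd p l)

theorem sat_bigAnd (p : P) (w : DataWord P) (i : ℕ) (l : List (MTL P)) :
    MTL.sat w i (bigAnd p l) ↔ ∀ φ ∈ l, MTL.sat w i φ := by
  induction l with
  | nil => simpa [bigAnd, MTL.sat] using sat_falseF p w i
  | cons φ l ih => simp [bigAnd, MTL.sat, ih]

def bigOr (p : P) : List (MTL P) → MTL P
  | [] => falseF p
  | φ :: l => .neg (.and (.neg φ) (.neg (bigOr p l)))

theorem sat_bigOr (p : P) (w : DataWord P) (i : ℕ) (l : List (MTL P)) :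
    MTL.sat w i (bigOr p l) ↔ ∃ φ ∈ l, MTL.sat w i φ := by
  induction l with
  | nil => simpa [bigOr, MTL.sat] using sat_falseF p w i
  | cons φ l ih =>
    simp only [bigOr, MTL.sat, ih, List.mem_cons]
    constructor
    · intro h
      rcases not_and_or.mp h with h | h
      · exact ⟨φ, Or.inl rfl, not_not.mp h⟩
      · obtain ⟨χ, hχ, hs⟩ := not_not.mp h
        exact ⟨χ, Or.inr hχ, hs⟩
    · rintro ⟨χ, (rfl | hχ), hs⟩
      · exact fun h => h.1 hs
      · exact fun h => h.2 ⟨χ, hχ, hs⟩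

/-- DNF normal form for a boolean function applied to generators. -/
noncomputable def dnf (p : P) (G : List (MTL P))
    (b : (Fin G.length → Bool) → Bool) : MTL P :=
  bigOr p (((Finset.univ : Finset (Fin G.length → Bool)).toList.filter
      (fun a => b a)).map
    (fun a => bigAnd p ((List.finRange G.length).map
      (fun j => if a j then G.get j else .neg (G.get j)))))

theorem sat_dnf (p : P) (G : List (MTL P)) (b : (Fin G.length → Bool) → Bool)
    (w : DataWord P) (i : ℕ) :
    MTL.sat w i (dnf p G b) ↔ b (ev G w i) = true := by
  rw [dnf, sat_bigOr]
  constructor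
  · rintro ⟨χ, hmem, hsat⟩
    simp only [List.mem_map, List.mem_filter, Finset.mem_toList, Finset.mem_univ,
      true_and] at hmem
    obtain ⟨a, hba, rfl⟩ := hmem
    rw [sat_bigAnd] at hsat
    have : ev G w i = a := by
      funext j
      have hs := hsat _ (List.mem_map_of_mem (List.mem_finRange j))
      by_cases h : a j = true
      · rw [h]
        rw [if_pos h] at hs
        simpa [ev] using hs
      · rw [eq_false_of_ne_true h]
        rw [if_neg h] at hs
        simp only [MTL.sat] at hs
        simpa [ev] using hs
    rw [this]; exact hba
  · intro hb
    refine ⟨_, List.mem_map_of_mem (List.mem_filter.mpr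
      ⟨Finset.mem_toList.mpr (Finset.mem_univ _), hb⟩), ?_⟩
    rw [sat_bigAnd]
    intro χ hχ
    simp only [List.mem_map, List.mem_finRange, true_and] at hχ
    obtain ⟨j, rfl⟩ := hχ
    by_cases h : ev G w i j = true
    · rw [if_pos h]
      simpa [ev] using h
    · rw [if_neg h]
      simp only [MTL.sat]
      simpa [ev] using h

theorem boolComb_fun {G : List (MTL P)} {φ : MTL P} (h : BoolComb G φ) :
    ∃ b : (Fin G.length → Bool) → Bool,
      ∀ w i, MTL.sat w i φ ↔ b (ev G w i) = true := by
  induction h with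
  | base φ hφ =>
    obtain ⟨j, hj⟩ := List.mem_iff_get.mp hφ
    subst hj
    exact ⟨fun a => a j, fun w i => by simp [ev]⟩
  | neg _ ih =>
    obtain ⟨b, hb⟩ := ih
    exact ⟨fun a => ! b a, fun w i => by simp [MTL.sat, hb w i]⟩
  | and _ _ ih1 ih2 =>
    obtain ⟨b1, hb1⟩ := ih1
    obtain ⟨b2, hb2⟩ := ih2
    exact ⟨fun a => b1 a && b2 a, fun w i => by
      simp [MTL.sat, hb1 w i, hb2 w i]⟩

theorem boolComb_rep (p : P) (G : List (MTL P)) :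
    ∃ L : List (MTL P), ∀ φ, BoolComb G φ → ∃ ψ ∈ L, MTL.equivF φ ψ := by
  refine ⟨(Finset.univ : Finset ((Fin G.length → Bool) → Bool)).toList.map
    (dnf p G), ?_⟩
  intro φ hφ
  obtain ⟨b, hb⟩ := boolComb_fun hφ
  refine ⟨dnf p G b, List.mem_map_of_mem (Finset.mem_toList.mpr
    (Finset.mem_univ _)), fun w i => ?_⟩
  rw [sat_dnf, hb]

end MTLAux

namespace MTLAux

/-- All intervals with endpoints in a finite set. -/
noncomputable def ivList (S : Set EInt') (hS : S.Finite) : List Iv :=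
  hS.toFinset.toList.flatMap (fun lo => hS.toFinset.toList.flatMap (fun hi =>
    [true, false].flatMap (fun b1 => [true, false].map (fun b2 => ⟨lo, hi, b1, b2⟩))))

theorem mem_ivList {S : Set EInt'} (hS : S.Finite) {I : Iv}
    (h1 : I.lo ∈ S) (h2 : I.hi ∈ S) : I ∈ ivList S hS := by
  simp only [ivList, List.mem_flatMap, List.mem_map, Finset.mem_toList,
    Set.Finite.mem_toFinset, List.mem_cons, List.mem_singleton]
  refine ⟨I.lo, h1, I.hi, h2, I.loOpen, by cases I.loOpen <;> simp,
    I.hiOpen, by cases I.hiOpen <;> simp, rfl⟩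

variable {P : Type} [Fintype P]

theorem bc_rep (p : P) (S : Set EInt') (hS : S.Finite) (k : ℕ) (L : List (MTL P))
    (hL : ∀ φ : MTL P, MTL.urk φ + 1 ≤ k → MTL.endpointsIn φ S →
      ∃ ψ ∈ L, MTL.equivF φ ψ) :
    ∃ L' : List (MTL P), ∀ φ : MTL P, MTL.urk φ ≤ k → MTL.endpointsIn φ S →
      ∃ ψ ∈ L', MTL.equivF φ ψ := by
  set G : List (MTL P) :=
    (Finset.univ : Finset P).toList.map .atom ++
    L.flatMap (fun φ' => L.flatMap (fun ψ' => (ivList S hS).map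
      (fun I => .untl φ' I ψ'))) with hG
  obtain ⟨L', hL'⟩ := boolComb_rep p G
  refine ⟨L', ?_⟩
  suffices h : ∀ φ : MTL P, MTL.urk φ ≤ k → MTL.endpointsIn φ S →
      ∃ χ, BoolComb G χ ∧ MTL.equivF φ χ by
    intro φ h1 h2
    obtain ⟨χ, hχ, he⟩ := h φ h1 h2
    obtain ⟨ψ, hψ, he'⟩ := hL' χ hχ
    exact ⟨ψ, hψ, equivF_trans he he'⟩
  intro φ
  induction φ with
  | atom q =>
    intro _ _
    refine ⟨.atom q, BoolComb.base _ ?_, equivF_refl _⟩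
    simp [hG]
  | neg φ ih =>
    intro h1 h2
    obtain ⟨χ, hχ, he⟩ := ih h1 h2
    exact ⟨.neg χ, BoolComb.neg hχ, fun w i => by simp [MTL.sat, he w i]⟩
  | and φ ψ ih1 ih2 =>
    intro h1 h2
    simp only [MTL.urk, max_le_iff] at h1
    obtain ⟨χ1, hχ1, he1⟩ := ih1 h1.1 h2.1
    obtain ⟨χ2, hχ2, he2⟩ := ih2 h1.2 h2.2
    exact ⟨.and χ1 χ2, BoolComb.and hχ1 hχ2,
      fun w i => by simp [MTL.sat, he1 w i, he2 w i]⟩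
  | untl φ I ψ _ _ =>
    intro h1 h2
    simp only [MTL.urk] at h1
    obtain ⟨hlo, hhi, hφ, hψ⟩ := h2
    obtain ⟨φ', hφ', heφ⟩ := hL φ (by omega) hφ
    obtain ⟨ψ', hψ', heψ⟩ := hL ψ (by omega) hψ
    refine ⟨.untl φ' I ψ', BoolComb.base _ ?_, equivF_untl I heφ heψ⟩
    simp only [hG, List.mem_append, List.mem_flatMap, List.mem_map]
    exact Or.inr ⟨φ', hφ', ψ', hψ', I, mem_ivList hS hlo hhi, rfl⟩

end MTLAux

/-- For a finite endpoint set `S` and rank bound `k`, there are only finitely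
many formulas in `MTL^S_k` up to equivalence. -/
theorem mtl_rank_endpoints_finite {P : Type} [Fintype P]
    (S : Set EInt') (hS : S.Finite) (k : ℕ) :
    ∃ L : List (MTL P), ∀ φ : MTL P, MTL.urk φ ≤ k → MTL.endpointsIn φ S →
      ∃ ψ ∈ L, MTL.equivF φ ψ := by

  by_cases hP : Nonempty P
  · obtain ⟨p⟩ := hP
    induction k with
    | zero =>
      exact MTLAux.bc_rep p S hS 0 [] (fun φ h _ => by omega)
    | succ k ih =>
      obtain ⟨L, hL⟩ := ih
      exact MTLAux.bc_rep p S hS (k + 1) L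
        (fun φ h hE => hL φ (by omega) hE)
  · refine ⟨[], fun φ _ _ => absurd ⟨MTLAux.someAtom φ⟩ hP⟩
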